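/- For all n, the sum over k from 0 to n of C(2n, 2k) · catalan(k) · catalan(n−k) equals catalan(n) · catalan(n+1). -/

import Mathlib

open Nat Finset

private lemma cat_cast (k : ℕ) : (catalan k : ℚ) = (2 * k)! / (k ! * (k + 1)!) := by
  have h : ((k + 1) * catalan k : ℕ) = ((2 * k).choose k : ℕ) := by
    rw [succ_mul_catalan_eq_centralBinom, Nat.centralBinom_eq_two_mul_choose]
  have hkk : ((k : ℚ) + 1) ≠ 0 := by positivity
  have h2 : ((k : ℚ) + 1) * catalan k = (2 * k)! / (k ! * k !) := by
    have h' := congrArg (Nat.cast (R := ℚ)) h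
    push_cast at h'
    rw [h', Nat.cast_choose ℚ (by omega : k ≤ 2 * k), show 2 * k - k = k by omega]
  have h3 : (catalan k : ℚ) = (2 * k)! / (k ! * k !) / ((k : ℚ) + 1) := by
    rw [eq_div_iff hkk]; linarith [h2]
  have hk : (k ! : ℚ) ≠ 0 := by exact_mod_cast k.factorial_ne_zero
  rw [h3, Nat.factorial_succ]
  push_cast
  field_simp

private lemma vandermonde (n : ℕ) :
    (2 * n + 2).choose n = ∑ k ∈ range (n + 1), (n + 1).choose k * (n + 1).choose (k + 1) := by
  have h : 2 * n + 2 = (n + 1) + (n + 1) := by ring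
  rw [h, Nat.add_choose_eq,
    Nat.sum_antidiagonal_eq_sum_range_succ (fun i j => (n + 1).choose i * (n + 1).choose j) n]
  refine Finset.sum_congr rfl fun k hk => ?_
  have hk' : k ≤ n := by simpa using Nat.lt_succ_iff.mp (mem_range.mp hk)
  congr 1
  have : n - k = (n + 1) - (k + 1) := by omega
  rw [this, Nat.choose_symm (by omega)]

theorem sum_choose_catalan (n : ℕ) :
    ∑ k ∈ Finset.range (n + 1), (2 * n).choose (2 * k) * catalan k * catalan (n - k) =
      catalan n * catalan (n + 1) := by
  have key : ∀ k ∈ range (n + 1),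
      (((2 * n).choose (2 * k) * catalan k * catalan (n - k) : ℕ) : ℚ) =
        (2 * n)! / ((n + 1)! * (n + 1)!) *
          ((n + 1).choose k * (n + 1).choose (k + 1)) := by
    intro k hk
    have hkn : k ≤ n := Nat.lt_succ_iff.mp (mem_range.mp hk)
    have h2k : 2 * k ≤ 2 * n := by omega
    push_cast
    rw [Nat.cast_choose ℚ h2k, cat_cast k, cat_cast (n - k),
      Nat.cast_choose ℚ (by omega : k ≤ n + 1),
      Nat.cast_choose ℚ (by omega : k + 1 ≤ n + 1)]
    have e1 : 2 * n - 2 * k = 2 * (n - k) := by omega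
    have e2 : n + 1 - k = (n - k) + 1 := by omega
    have e3 : n + 1 - (k + 1) = n - k := by omega
    rw [e1, e2, e3]
    have f1 : ((2 * n)! : ℚ) ≠ 0 := by exact_mod_cast (2 * n).factorial_ne_zero
    have f2 : ((2 * k)! : ℚ) ≠ 0 := by exact_mod_cast (2 * k).factorial_ne_zero
    have f3 : ((2 * (n - k))! : ℚ) ≠ 0 := by exact_mod_cast (2 * (n - k)).factorial_ne_zero
    have f4 : ((k)! : ℚ) ≠ 0 := by exact_mod_cast k.factorial_ne_zero
    have f5 : ((k + 1)! : ℚ) ≠ 0 := by exact_mod_cast (k + 1).factorial_ne_zero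
    have f6 : ((n - k)! : ℚ) ≠ 0 := by exact_mod_cast (n - k).factorial_ne_zero
    have f7 : ((n - k + 1)! : ℚ) ≠ 0 := by exact_mod_cast (n - k + 1).factorial_ne_zero
    have f8 : ((n + 1)! : ℚ) ≠ 0 := by exact_mod_cast (n + 1).factorial_ne_zero
    field_simp
  have hQ : ((∑ k ∈ Finset.range (n + 1),
      (2 * n).choose (2 * k) * catalan k * catalan (n - k) : ℕ) : ℚ) =
      ((catalan n * catalan (n + 1) : ℕ) : ℚ) := by
    rw [Nat.cast_sum, Finset.sum_congr rfl key, ← Finset.mul_sum]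
    have hv := congrArg (Nat.cast (R := ℚ)) (vandermonde n)
    push_cast at hv
    rw [← hv, Nat.cast_mul, cat_cast n, cat_cast (n + 1),
      Nat.cast_choose ℚ (by omega : n ≤ 2 * n + 2)]
    have e1 : 2 * n + 2 - n = n + 2 := by omega
    have e2 : 2 * (n + 1) = 2 * n + 2 := by omega
    rw [e1, e2]
    have f1 : ((2 * n)! : ℚ) ≠ 0 := by exact_mod_cast (2 * n).factorial_ne_zero
    have f2 : ((2 * n + 2)! : ℚ) ≠ 0 := by exact_mod_cast (2 * n + 2).factorial_ne_zero
    have f3 : ((n)! : ℚ) ≠ 0 := by exact_mod_cast n.factorial_ne_zero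
    have f4 : ((n + 1)! : ℚ) ≠ 0 := by exact_mod_cast (n + 1).factorial_ne_zero
    have f5 : ((n + 2)! : ℚ) ≠ 0 := by exact_mod_cast (n + 2).factorial_ne_zero
    field_simp
  exact_mod_cast hQ
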